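/- Let t = 2^a with a = 4c + d, 0 ≤ d ≤ 3, so ρ(t) = 8c + 2^d. Write each element of {0,…,ρ(t)−1} as 8l + m with 0 ≤ m ≤ 7 (l = c forces m < 2^d). Define γ_t(8l+m) = (8t/15)(1 − 2^{−4l}) + t·m·16^{−(l+1)} if l < c, and γ_t(8l+m) = (8t/15)(1 − 2^{−4c}) + m if l = c. Define χ_t(8l+m) = 0 if l = 0, m = 0; (t/2)·2^{−4(l−1)} if l ≠ 0, m = 0; ψ̂_{2^d}(m) if l = c, m ≠ 0; (t/2)·2^{−4l} + t·ψ̂_8(m)·2^{−4(l+1)} if l ≠ c, m ≠ 0. Then for all x₁, x₂ ∈ {0,…,ρ(t)−1} with x₁ ≠ x₂, the Hamming weight |(γ_t(x₁) ⊕ γ_t(x₂)) ∧ (χ_t(x₁) ⊕ χ_t(x₂))| is odd. -/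

import Mathlib

/-- Hamming weight (popcount) of a natural number. -/
def hw (x : ℕ) : ℕ := (Nat.digits 2 x).sum

/-- The permutation `φ₁` of `{0,…,7}` sending `(0,1,2,3,4,5,6,7)` to `(0,1,2,3,4,7,5,6)`. -/
def phi1 : ℕ → ℕ
  | 5 => 7
  | 6 => 5
  | 7 => 6
  | x => x

/-- `ψ̂_{2^e}(m) = (2^e − φ₁(m)) mod 2^e`. -/
def psiHat (e m : ℕ) : ℕ := (2 ^ e - phi1 m) % 2 ^ e

/-- Geramita–Pullman map `γ_t` (`t = 2^a`, `a = 4c + d`):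
`γ_t(8l+m) = (8t/15)(1 − 2^{−4l}) + t·m·16^{−(l+1)}` if `l < c`, and
`γ_t(8l+m) = (8t/15)(1 − 2^{−4c}) + m` if `l = c` (all values exact naturals). -/
def gammaGP (a c x : ℕ) : ℕ :=
  let l := x / 8
  let m := x % 8
  if l < c then 8 * (2 ^ a - 2 ^ a / 16 ^ l) / 15 + 2 ^ a * m / 16 ^ (l + 1)
  else 8 * (2 ^ a - 2 ^ a / 16 ^ c) / 15 + m

/-- Geramita–Pullman map `χ_t` (`t = 2^a`, `a = 4c + d`):
`χ_t(8l+m) = 0` if `l = 0, m = 0`; `(t/2)·2^{−4(l−1)}` if `l ≠ 0, m = 0`;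
`ψ̂_{2^d}(m)` if `l = c, m ≠ 0`; `(t/2)·2^{−4l} + t·ψ̂_8(m)·2^{−4(l+1)}` if
`l ≠ c, m ≠ 0` (all values exact naturals). -/
def chiGP (a c d x : ℕ) : ℕ :=
  let l := x / 8
  let m := x % 8
  if m = 0 then (if l = 0 then 0 else 8 * 2 ^ a / 16 ^ l)
  else if l = c then psiHat d m
  else (2 ^ a / 2) / 16 ^ l + (2 ^ a / 16 ^ (l + 1)) * psiHat 3 m


lemma hw_rec (n : ℕ) : hw n = n % 2 + hw (n / 2) := by
  rcases Nat.eq_zero_or_pos n with h | h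
  · simp [h, hw]
  · unfold hw
    rw [Nat.digits_def' (by norm_num : 1 < 2) h, List.sum_cons]

lemma hw_two_mul (n : ℕ) : hw (2 * n) = hw n := by
  rw [hw_rec (2*n)]; simp [Nat.mul_div_cancel_left]

lemma hw_pow_mul (k n : ℕ) : hw (2 ^ k * n) = hw n := by
  induction k with
  | zero => simp
  | succ k ih => rw [pow_succ, mul_comm (2^k) 2, mul_assoc, hw_two_mul, ih]

lemma hw_add (k x y : ℕ) (hx : x < 2 ^ k) : hw (x + 2 ^ k * y) = hw x + hw y := by
  induction k generalizing x with
  | zero => interval_cases x; simp [hw_pow_mul, hw]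
  | succ k ih =>
    rw [hw_rec (x + 2^(k+1)*y), hw_rec x]
    have h1 : (x + 2^(k+1)*y) % 2 = x % 2 := by
      have : 2^(k+1)*y = 2*(2^k*y) := by ring
      omega
    have h2 : (x + 2^(k+1)*y) / 2 = x/2 + 2^k*y := by
      have : x + 2^(k+1)*y = x + 2*(2^k*y) := by ring
      rw [this, Nat.add_mul_div_left _ _ (by norm_num : (0:ℕ) < 2)]
    rw [h1, h2, ih (x/2) (by omega)]
    ring

lemma xor_div_two (u v : ℕ) : (u ^^^ v) / 2 = u / 2 ^^^ v / 2 := by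
  have h : ∀ n : ℕ, n / 2 = n >>> 1 := by
    intro n; simp [Nat.shiftRight_eq_div_pow]
  rw [h, h, h]
  apply Nat.eq_of_testBit_eq
  intro i
  simp [Nat.testBit_shiftRight, Nat.testBit_xor]

lemma xor_mod_two (u v : ℕ) : (u ^^^ v) % 2 = (u % 2 + v % 2) % 2 := by
  have h : ∀ n : ℕ, n % 2 = n &&& 1 := fun n => (Nat.and_one_is_mod n).symm
  rw [h (u ^^^ v), Nat.and_xor_distrib_right, ← h u, ← h v]
  rcases Nat.mod_two_eq_zero_or_one u with h1 | h1 <;>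
    rcases Nat.mod_two_eq_zero_or_one v with h2 | h2 <;> rw [h1, h2] <;> decide

lemma hw_xor_parity (u : ℕ) : ∀ v, hw (u ^^^ v) % 2 = (hw u + hw v) % 2 := by
  induction u using Nat.strong_induction_on with
  | _ u ih =>
    intro v
    rcases Nat.eq_zero_or_pos u with h | h
    · simp [h, hw]
    · rw [hw_rec (u ^^^ v), hw_rec u, hw_rec v, xor_div_two, xor_mod_two]
      have h3 := ih (u/2) (Nat.div_lt_self h (by norm_num)) (v/2)
      omega

lemma and_pow_mul (x v s : ℕ) : x &&& (2 ^ s * v) = 2 ^ s * ((x / 2 ^ s) &&& v) := by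
  have h1 : 2 ^ s * v = v <<< s := by rw [Nat.shiftLeft_eq]; ring
  have h2 : x / 2 ^ s = x >>> s := (Nat.shiftRight_eq_div_pow x s).symm
  have h3 : 2 ^ s * (x >>> s &&& v) = (x >>> s &&& v) <<< s := by
    rw [Nat.shiftLeft_eq]; ring
  rw [h1, h2, h3]
  apply Nat.eq_of_testBit_eq
  intro i
  simp only [Nat.testBit_and, Nat.testBit_shiftLeft, Nat.testBit_shiftRight]
  by_cases hi : s ≤ i
  · simp [hi, ge_iff_le, Nat.add_sub_cancel' hi]
  · simp [hi, ge_iff_le]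

lemma and_small (u v k : ℕ) (hv : v < 2 ^ k) : u &&& v = (u % 2 ^ k) &&& v := by
  apply Nat.eq_of_testBit_eq
  intro i
  simp only [Nat.testBit_and, Nat.testBit_mod_two_pow]
  by_cases hi : i < k
  · simp [hi]
  · have hvi : v.testBit i = false := Nat.testBit_lt_two_pow (lt_of_lt_of_le hv (Nat.pow_le_pow_right (by norm_num) (by omega)))
    simp [hi, hvi]

lemma hw_and_nibble (x v s : ℕ) (hv : v < 16) :
    hw (x &&& (2 ^ s * v)) = hw ((x / 2 ^ s % 16) &&& v) := by
  rw [and_pow_mul, hw_pow_mul, and_small _ v 4 (by norm_num [hv] : v < 2^4)]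
  norm_num

lemma div_pow_mod (low nib high s : ℕ) (hlow : low < 2 ^ s) (hnib : nib < 16) :
    (low + 2 ^ s * (nib + 16 * high)) / 2 ^ s % 16 = nib := by
  rw [Nat.add_mul_div_left _ _ (Nat.pow_pos (n := s) (by norm_num)),
    Nat.div_eq_of_lt hlow, zero_add, Nat.add_mul_mod_self_left, Nat.mod_eq_of_lt hnib]

lemma hw_bilin (u₁ u₂ v₁ v₂ : ℕ) :
    hw ((u₁ ^^^ u₂) &&& (v₁ ^^^ v₂)) % 2 =
      (hw (u₁ &&& v₁) + hw (u₁ &&& v₂) + hw (u₂ &&& v₁) + hw (u₂ &&& v₂)) % 2 := by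
  rw [Nat.and_xor_distrib_right, hw_xor_parity]
  rw [Nat.and_xor_distrib_left, Nat.and_xor_distrib_left]
  have a1 := hw_xor_parity (u₁ &&& v₁) (u₁ &&& v₂)
  have a2 := hw_xor_parity (u₂ &&& v₁) (u₂ &&& v₂)
  omega

def Jr : ℕ → ℕ
  | 0 => 0
  | l + 1 => 16 * Jr l + 1

lemma Jr15 (l : ℕ) : 15 * Jr l + 1 = 16 ^ l := by
  induction l with
  | zero => rfl
  | succ l ih => rw [pow_succ]; unfold Jr; omega

lemma Jr8 (l : ℕ) : 8 * Jr l + 1 ≤ 16 ^ l := by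
  have := Jr15 l; omega

lemma Jr_split (u v : ℕ) : Jr (u + v) = 16 ^ v * Jr u + Jr v := by
  induction v with
  | zero => simp [Jr]
  | succ v ih =>
    have : u + (v + 1) = (u + v) + 1 := by omega
    rw [this]
    show 16 * Jr (u + v) + 1 = _
    rw [ih]
    show _ = 16 ^ (v+1) * Jr u + (16 * Jr v + 1)
    rw [pow_succ]; ring

lemma psiHat_lt (e m : ℕ) : psiHat e m < 2 ^ e :=
  Nat.mod_lt _ (Nat.pow_pos (n := e) (by norm_num))

lemma div8 (l m : ℕ) (hm : m < 8) : (8 * l + m) / 8 = l := by omega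
lemma mod8 (l m : ℕ) (hm : m < 8) : (8 * l + m) % 8 = m := by omega

lemma pow16 (l : ℕ) : (16 : ℕ) ^ l = 2 ^ (4 * l) := by
  rw [show (16:ℕ) = 2^4 by norm_num, ← pow_mul]

lemma gamma_lt_eq (a c l m e : ℕ) (hlc : l < c) (hm : m < 8) (he : a = 4 * l + 4 + e) :
    gammaGP a c (8 * l + m) = 2 ^ (e + 7) * Jr l + 2 ^ e * m := by
  unfold gammaGP
  simp only [div8 l m hm, mod8 l m hm, if_pos hlc]
  have h16 : (16:ℕ) ^ l = 2 ^ (4*l) := pow16 l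
  have h2a : (2:ℕ) ^ a = 2 ^ (4*l) * 2 ^ (e + 4) := by
    rw [← pow_add]; try (congr 1; omega)
  have hdiv : (2:ℕ) ^ a / 16 ^ l = 2 ^ (e + 4) := by
    rw [h2a, h16, Nat.mul_div_cancel_left _ (Nat.pow_pos (by norm_num))]
  have hsub : (2:ℕ) ^ a - 2 ^ (e+4) = 2 ^ (e+4) * (16 ^ l - 1) := by
    rw [Nat.mul_sub, mul_one, h2a, h16]; try ring_nf
  have h15 : (16:ℕ) ^ l - 1 = 15 * Jr l := by have := Jr15 l; omega
  have hfirst : 8 * ((2:ℕ) ^ a - 2 ^ a / 16 ^ l) / 15 = 2 ^ (e+7) * Jr l := by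
    rw [hdiv, hsub, h15]
    rw [show 8 * (2^(e+4) * (15 * Jr l)) = 15 * (2^(e+7) * Jr l) by ring]
    exact Nat.mul_div_cancel_left _ (by norm_num)
  have hsecond : (2:ℕ) ^ a * m / 16 ^ (l+1) = 2 ^ e * m := by
    have : (16:ℕ) ^ (l+1) = 2 ^ (4*l+4) := by rw [pow16]; ring
    rw [this, show (2:ℕ)^a * m = 2^(4*l+4) * (2^e * m) by rw [he]; try ring]
    exact Nat.mul_div_cancel_left _ (Nat.pow_pos (by norm_num))
  rw [hfirst, hsecond]

lemma gamma_c_eq (a c d m : ℕ) (ha : a = 4 * c + d) (hm : m < 8) :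
    gammaGP a c (8 * c + m) = 2 ^ (d + 3) * Jr c + m := by
  unfold gammaGP
  simp only [div8 c m hm, mod8 c m hm, if_neg (lt_irrefl c)]
  have h16 : (16:ℕ) ^ c = 2 ^ (4*c) := pow16 c
  have h2a : (2:ℕ) ^ a = 2 ^ (4*c) * 2 ^ d := by rw [← pow_add, ha]
  have hdiv : (2:ℕ) ^ a / 16 ^ c = 2 ^ d := by
    rw [h2a, h16, Nat.mul_div_cancel_left _ (Nat.pow_pos (by norm_num))]
  have hsub : (2:ℕ) ^ a - 2 ^ d = 2 ^ d * (16 ^ c - 1) := by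
    rw [Nat.mul_sub, mul_one, h2a, h16]; try ring_nf
  have h15 : (16:ℕ) ^ c - 1 = 15 * Jr c := by have := Jr15 c; omega
  have hfirst : 8 * ((2:ℕ) ^ a - 2 ^ a / 16 ^ c) / 15 = 2 ^ (d+3) * Jr c := by
    rw [hdiv, hsub, h15]
    rw [show 8 * (2^d * (15 * Jr c)) = 15 * (2^(d+3) * Jr c) by ring]
    exact Nat.mul_div_cancel_left _ (by norm_num)
  rw [hfirst]

lemma chi_zero (a c d : ℕ) : chiGP a c d 0 = 0 := by
  unfold chiGP; norm_num

lemma chi_m0 (a c d l e : ℕ) (hl : 1 ≤ l) (he : a = 4 * l + e) :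
    chiGP a c d (8 * l) = 2 ^ (e + 3) := by
  unfold chiGP
  have h1 : 8 * l / 8 = l := by omega
  have h2 : 8 * l % 8 = 0 := by omega
  simp only [h1, h2, if_pos rfl, if_neg (by omega : l ≠ 0)]
  simp only [if_true]
  rw [pow16, show 8 * (2:ℕ)^a = 2^(4*l) * 2^(e+3) by rw [← pow_add]; rw [he]; try ring_nf, Nat.mul_div_cancel_left _ (Nat.pow_pos (by norm_num))]

lemma chi_lc (a c d l m e : ℕ) (hlc : l ≠ c) (hm : 0 < m) (hm8 : m < 8)
    (he : a = 4 * l + 4 + e) :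
    chiGP a c d (8 * l + m) = 2 ^ e * (8 + psiHat 3 m) := by
  unfold chiGP
  simp only [div8 l m hm8, mod8 l m hm8, if_neg (by omega : ¬ m = 0), if_neg hlc]
  have h1 : (2:ℕ) ^ a / 2 / 16 ^ l = 2 ^ (e + 3) := by
    rw [show (2:ℕ)^a / 2 = 2^(4*l) * 2^(e+3) from ?_, pow16,
      Nat.mul_div_cancel_left _ (Nat.pow_pos (by norm_num))]
    rw [show (2:ℕ)^a = (2^(4*l) * 2^(e+3)) * 2 by rw [← pow_add, ← pow_succ]; try (congr 1; omega)]
    exact Nat.mul_div_cancel _ (by norm_num)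
  have h2 : (2:ℕ) ^ a / 16 ^ (l+1) = 2 ^ e := by
    rw [show (16:ℕ)^(l+1) = 2^(4*l+4) from by rw [pow16]; ring,
      show (2:ℕ)^a = 2^(4*l+4) * 2^e from by rw [← pow_add, he]]
    exact Nat.mul_div_cancel_left _ (Nat.pow_pos (by norm_num))
  rw [h1, h2]; ring

lemma chi_cc (a c d m : ℕ) (hm : 0 < m) (hm8 : m < 8) :
    chiGP a c d (8 * c + m) = psiHat d m := by
  unfold chiGP
  simp only [div8 c m hm8, mod8 c m hm8, if_neg (by omega : ¬ m = 0), if_pos rfl]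
  simp only [if_true]

lemma gamma_shape (a c d l m : ℕ) (ha : a = 4 * c + d) (hl : l ≤ c) (hm : m < 8)
    (hmc : l = c → m < 2 ^ d) :
    ∃ g T, a = 4 * l + g ∧ gammaGP a c (8 * l + m) = 2 ^ (g + 3) * Jr l + T ∧ T < 2 ^ g := by
  rcases Nat.lt_or_ge l c with hlt | hge
  · have he : a = 4 * l + 4 + (4 * (c - l - 1) + d) := by omega
    refine ⟨4 * (c - l - 1) + d + 4, 2 ^ (4 * (c - l - 1) + d) * m, by omega, ?_, ?_⟩
    · rw [gamma_lt_eq a c l m _ hlt hm he]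
      try ring_nf
    · have hpe : (2:ℕ) ^ (4 * (c - l - 1) + d + 4) = 2 ^ (4 * (c - l - 1) + d) * 16 := by
        rw [pow_add]; norm_num
      rw [hpe]
      exact Nat.mul_lt_mul_left (Nat.pow_pos (by norm_num)) |>.mpr (by omega)
  · have hlc : l = c := le_antisymm hl hge
    subst hlc
    exact ⟨d, m, by omega, gamma_c_eq a l d m ha hm, hmc rfl⟩

lemma NBmarker (a c d l m k e : ℕ) (ha : a = 4 * c + d) (hl : l ≤ c) (hm : m < 8)
    (hmc : l = c → m < 2 ^ d) (hk1 : 1 ≤ k) (hkl : k ≤ l) (he : a = 4 * k + e) :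
    gammaGP a c (8 * l + m) / 2 ^ e % 16 = 8 := by
  obtain ⟨g, T, hag, hG, hT⟩ := gamma_shape a c d l m ha hl hm hmc
  obtain ⟨n, rfl⟩ : ∃ n, l = k + n := ⟨l - k, by omega⟩
  obtain ⟨k', rfl⟩ : ∃ k', k = k' + 1 := ⟨k - 1, by omega⟩
  have hge : e = 4 * n + g := by omega
  have key : gammaGP a c (8 * (k' + 1 + n) + m)
      = (2 ^ (g + 3) * Jr n + T) + 2 ^ e * (8 + 16 * (8 * Jr k')) := by
    rw [hG, Jr_split (k' + 1) n]
    show 2 ^ (g + 3) * (16 ^ n * (16 * Jr k' + 1) + Jr n) + T = _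
    rw [hge, pow16]
    ring
  have hlow : 2 ^ (g + 3) * Jr n + T < 2 ^ e := by
    have h1 := Jr8 n
    have h2 : 2 ^ (g + 3) * Jr n + T < 2 ^ g * (8 * Jr n + 1) := by
      rw [pow_add]
      have : 2 ^ g * 2 ^ 3 * Jr n = 2 ^ g * (8 * Jr n) := by ring
      rw [this, Nat.mul_add, mul_one]
      exact Nat.add_lt_add_left hT _
    have h3 : 2 ^ g * (8 * Jr n + 1) ≤ 2 ^ g * 16 ^ n :=
      Nat.mul_le_mul_left _ h1
    have h4 : 2 ^ g * 16 ^ n = 2 ^ e := by rw [pow16, ← pow_add, hge]; ring_nf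
    omega
  rw [key, div_pow_mod _ _ _ _ hlow (by norm_num)]

lemma NBown (a c l m e : ℕ) (hlt : l < c) (hm : m < 8) (he : a = 4 * l + 4 + e) :
    gammaGP a c (8 * l + m) / 2 ^ e % 16 = m := by
  have key : gammaGP a c (8 * l + m) = 0 + 2 ^ e * (m + 16 * (8 * Jr l)) := by
    rw [gamma_lt_eq a c l m e hlt hm he]; ring
  rw [key, div_pow_mod _ _ _ _ (Nat.pow_pos (by norm_num)) (by omega)]

lemma NBdiv (a c l m k e : ℕ) (hm : m < 8) (hlk : l + 2 ≤ k) (hkc : k ≤ c)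
    (he : a = 4 * k + e) :
    gammaGP a c (8 * l + m) / 2 ^ e % 16 = 0 := by
  obtain ⟨u, rfl⟩ : ∃ u, k = l + 2 + u := ⟨k - l - 2, by omega⟩
  have hf : a = 4 * l + 4 + (4 * u + e + 4) := by omega
  have key : gammaGP a c (8 * l + m)
      = 0 + 2 ^ e * (0 + 16 * (2 ^ (4 * u + 7) * Jr l + 2 ^ (4 * u) * m)) := by
    rw [gamma_lt_eq a c l m _ (by omega) hm hf]; ring
  rw [key, div_pow_mod _ _ _ _ (Nat.pow_pos (by norm_num)) (by omega)]

lemma NBlow_lt (a c d l m : ℕ) (ha : a = 4 * c + d) (hlt : l < c) (hm : m < 8) :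
    gammaGP a c (8 * l + m) % 2 ^ d = 0 := by
  have hf : a = 4 * l + 4 + (4 * (c - l - 1) + d) := by omega
  have key : gammaGP a c (8 * l + m)
      = 2 ^ d * (2 ^ (4 * (c - l - 1) + 7) * Jr l + 2 ^ (4 * (c - l - 1)) * m) := by
    rw [gamma_lt_eq a c l m _ hlt hm hf]; ring
  rw [key, Nat.mul_mod_right]

lemma NBlow_c (a c d m : ℕ) (ha : a = 4 * c + d) (hm : m < 2 ^ d) (hd : d ≤ 3) :
    gammaGP a c (8 * c + m) % 2 ^ d = m := by
  have hm8 : m < 8 := lt_of_lt_of_le hm (le_trans (Nat.pow_le_pow_right (by norm_num) hd) (by norm_num))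
  have key : gammaGP a c (8 * c + m) = m + 2 ^ d * (8 * Jr c) := by
    rw [gamma_c_eq a c d m ha hm8]; ring
  rw [key, Nat.add_mul_mod_self_left, Nat.mod_eq_of_lt hm]

def pcF : ℕ → ℕ → ℕ
  | 0, _ => 0
  | fuel + 1, n => if n = 0 then 0 else n % 2 + pcF fuel (n / 2)

lemma pcF_eq (fuel : ℕ) : ∀ n, n ≤ fuel → pcF fuel n = hw n := by
  induction fuel with
  | zero => intro n h; interval_cases n; simp [pcF, hw]
  | succ f ih =>
    intro n h
    by_cases h0 : n = 0
    · simp [pcF, h0, hw]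
    · show (if n = 0 then 0 else n % 2 + pcF f (n / 2)) = hw n
      rw [if_neg h0, ih (n / 2) (by omega), ← hw_rec]

lemma hw_eq_pcF (n : ℕ) : hw n = pcF n n := (pcF_eq n n le_rfl).symm

lemma hw0 : hw 0 = 0 := by simp [hw]
lemma hw8 : hw 8 = 1 := by simp [hw]

lemma FFd (e m : ℕ) (he : e ≤ 3) (hm0 : 0 < m) (hme : m < 2 ^ e) :
    hw (m &&& psiHat e m) % 2 = 1 := by
  interval_cases e <;> norm_num at hme <;>
    first
      | omega
      | (interval_cases m <;> simp only [hw_eq_pcF] <;> decide)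

lemma FFo (e m m' : ℕ) (he : e ≤ 3) (h : 0 < m) (h' : 0 < m') (hme : m < 2 ^ e)
    (hme' : m' < 2 ^ e) (hne : m ≠ m') :
    (hw (m &&& psiHat e m') + hw (m' &&& psiHat e m)) % 2 = 1 := by
  interval_cases e <;> norm_num at hme hme' <;>
    first
      | omega
      | (interval_cases m <;> interval_cases m' <;> simp only [hw_eq_pcF] <;>
          first | omega | decide)

lemma g_val (a c d l m l' m' : ℕ) (hd : d ≤ 3) (ha : a = 4 * c + d)
    (hl : l ≤ c) (hm : m < 8) (hmc : l = c → m < 2 ^ d)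
    (hl' : l' ≤ c) (hm' : m' < 8) (hmc' : l' = c → m' < 2 ^ d) :
    hw (gammaGP a c (8 * l + m) &&& chiGP a c d (8 * l' + m')) =
      (if m' = 0 then (if 1 ≤ l' ∧ l' ≤ l then 1 else 0)
       else if l' < l then 1
       else if l' = l then hw (m &&& psiHat (if l' = c then d else 3) m')
       else 0) := by
  by_cases hm'0 : m' = 0
  · subst hm'0
    rw [if_pos rfl]
    by_cases hl'0 : l' = 0
    · subst hl'0
      rw [show (8 * 0 + 0 : ℕ) = 0 by norm_num, chi_zero, Nat.and_zero, hw0,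
        if_neg (by omega)]
    · have he' : a = 4 * l' + (4 * (c - l') + d) := by omega
      rw [show (8 * l' + 0 : ℕ) = 8 * l' by ring, chi_m0 a c d l' _ (by omega) he']
      rw [show (2:ℕ) ^ (4 * (c - l') + d + 3) = 2 ^ (4 * (c - l') + d) * 8 by
        rw [pow_add]; norm_num]
      rw [hw_and_nibble _ 8 _ (by norm_num)]
      by_cases hll : l' ≤ l
      · rw [NBmarker a c d l m l' _ ha hl hm hmc (by omega) hll he',
          if_pos ⟨by omega, hll⟩, show (8 &&& 8 : ℕ) = 8 by decide, hw8]
      · by_cases hll1 : l' = l + 1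
        · rw [NBown a c l m _ (by omega : l < c) hm (by omega : a = 4 * l + 4 + (4 * (c - l') + d))]
          rw [show m &&& 8 = 0 by interval_cases m <;> decide, hw0, if_neg (by omega)]
        · rw [NBdiv a c l m l' _ hm (by omega) hl' he', Nat.zero_and, hw0,
            if_neg (by omega)]
  · rw [if_neg hm'0]
    by_cases hcc : l' = c
    · rw [hcc]
      rw [chi_cc a c d m' (by omega) hm']
      rw [and_small _ _ d (psiHat_lt d m')]
      by_cases hlc : l = c
      · rw [hlc, NBlow_c a c d m ha (hmc hlc) hd,
          if_neg (lt_irrefl c), if_pos rfl, if_pos rfl]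
      · rw [NBlow_lt a c d l m ha (by omega) hm, Nat.zero_and, hw0,
          if_neg (by omega), if_neg (by omega)]
    · have he' : a = 4 * l' + 4 + (4 * (c - l' - 1) + d) := by omega
      rw [chi_lc a c d l' m' _ hcc (by omega) hm' he']
      have hψ := psiHat_lt 3 m'
      rw [hw_and_nibble _ _ _ (by norm_num at hψ ⊢; omega)]
      rcases lt_trichotomy l' l with h | h | h
      · rw [NBmarker a c d l m (l' + 1) _ ha hl hm hmc (by omega) (by omega) (by omega),
          if_pos h]
        have h8 : 8 &&& (8 + psiHat 3 m') = 8 := by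
          have hψ8 : psiHat 3 m' < 8 := by norm_num at hψ; omega
          interval_cases hx : (psiHat 3 m') <;> decide
        rw [h8, hw8]
      · subst h
        rw [NBown a c l' m _ (by omega : l' < c) hm (by omega), if_neg (by omega),
          if_pos rfl, if_neg hcc]
        have hand : m &&& (8 + psiHat 3 m') = m &&& psiHat 3 m' := by
          rw [Nat.and_comm, and_small _ _ 3 (by norm_num; omega), Nat.and_comm]
          congr 1
          have hψ8 : psiHat 3 m' < 8 := by norm_num at hψ; omega
          omega
        rw [hand]
      · rw [NBdiv a c l m (l' + 1) _ hm (by omega) (by omega) (by omega),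
          Nat.zero_and, hw0, if_neg (by omega), if_neg (by omega)]

lemma zero_and_hw (k : ℕ) : hw (0 &&& k) = 0 := by rw [Nat.zero_and, hw0]

lemma main_aux (a c d l₁ m₁ l₂ m₂ : ℕ) (hd : d ≤ 3) (ha : a = 4 * c + d)
    (hl₁ : l₁ ≤ c) (hm₁ : m₁ < 8) (hmc₁ : l₁ = c → m₁ < 2 ^ d)
    (hl₂ : l₂ ≤ c) (hm₂ : m₂ < 8) (hmc₂ : l₂ = c → m₂ < 2 ^ d)
    (hord : l₁ < l₂ ∨ (l₁ = l₂ ∧ m₁ < m₂)) :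
    (hw (gammaGP a c (8 * l₁ + m₁) &&& chiGP a c d (8 * l₁ + m₁)) +
     hw (gammaGP a c (8 * l₁ + m₁) &&& chiGP a c d (8 * l₂ + m₂)) +
     hw (gammaGP a c (8 * l₂ + m₂) &&& chiGP a c d (8 * l₁ + m₁)) +
     hw (gammaGP a c (8 * l₂ + m₂) &&& chiGP a c d (8 * l₂ + m₂))) % 2 = 1 := by
  rw [g_val a c d l₁ m₁ l₁ m₁ hd ha hl₁ hm₁ hmc₁ hl₁ hm₁ hmc₁,
      g_val a c d l₁ m₁ l₂ m₂ hd ha hl₁ hm₁ hmc₁ hl₂ hm₂ hmc₂,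
      g_val a c d l₂ m₂ l₁ m₁ hd ha hl₂ hm₂ hmc₂ hl₁ hm₁ hmc₁,
      g_val a c d l₂ m₂ l₂ m₂ hd ha hl₂ hm₂ hmc₂ hl₂ hm₂ hmc₂]
  rcases hord with h | ⟨rfl, hmm⟩
  · -- l₁ < l₂
    have hc₁ : l₁ ≠ c := by omega
    simp only [if_neg hc₁]
    by_cases hc₂ : l₂ = c
    · simp only [if_pos hc₂]
      by_cases h1 : m₁ = 0
      · subst h1
        by_cases h2 : m₂ = 0
        · subst h2
          split_ifs <;> omega
        · have F2 : hw (m₂ &&& psiHat d m₂) % 2 = 1 :=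
            FFd d m₂ hd (by omega) (hmc₂ hc₂)
          have Z1 : hw (0 &&& psiHat d m₂) = 0 := zero_and_hw _
          have Z2 : hw (0 &&& psiHat 3 m₂) = 0 := zero_and_hw _
          split_ifs <;> omega
      · have F1 : hw (m₁ &&& psiHat 3 m₁) % 2 = 1 :=
          FFd 3 m₁ (by norm_num) (by omega) (by norm_num; omega)
        by_cases h2 : m₂ = 0
        · subst h2
          split_ifs <;> omega
        · have F2 : hw (m₂ &&& psiHat d m₂) % 2 = 1 :=
            FFd d m₂ hd (by omega) (hmc₂ hc₂)
          split_ifs <;> omega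
    · simp only [if_neg hc₂]
      by_cases h1 : m₁ = 0
      · subst h1
        by_cases h2 : m₂ = 0
        · subst h2
          split_ifs <;> omega
        · have F2 : hw (m₂ &&& psiHat 3 m₂) % 2 = 1 :=
            FFd 3 m₂ (by norm_num) (by omega) (by norm_num; omega)
          have Z2 : hw (0 &&& psiHat 3 m₂) = 0 := zero_and_hw _
          split_ifs <;> omega
      · have F1 : hw (m₁ &&& psiHat 3 m₁) % 2 = 1 :=
          FFd 3 m₁ (by norm_num) (by omega) (by norm_num; omega)
        by_cases h2 : m₂ = 0
        · subst h2
          split_ifs <;> omega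
        · have F2 : hw (m₂ &&& psiHat 3 m₂) % 2 = 1 :=
            FFd 3 m₂ (by norm_num) (by omega) (by norm_num; omega)
          split_ifs <;> omega
  · -- l₁ = l₂ (now both are l₁), m₁ < m₂
    have h2 : m₂ ≠ 0 := by omega
    by_cases hc : l₁ = c
    · simp only [if_pos hc]
      have hme₂ : m₂ < 2 ^ d := hmc₂ hc
      have F2 : hw (m₂ &&& psiHat d m₂) % 2 = 1 := FFd d m₂ hd (by omega) hme₂
      by_cases h1 : m₁ = 0
      · subst h1
        have Z1 : hw (0 &&& psiHat d m₂) = 0 := zero_and_hw _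
        split_ifs <;> omega
      · have hme₁ : m₁ < 2 ^ d := hmc₁ hc
        have F1 : hw (m₁ &&& psiHat d m₁) % 2 = 1 := FFd d m₁ hd (by omega) hme₁
        have F3 : (hw (m₁ &&& psiHat d m₂) + hw (m₂ &&& psiHat d m₁)) % 2 = 1 :=
          FFo d m₁ m₂ hd (by omega) (by omega) hme₁ hme₂ (by omega)
        split_ifs <;> omega
    · simp only [if_neg hc]
      have F2 : hw (m₂ &&& psiHat 3 m₂) % 2 = 1 :=
        FFd 3 m₂ (by norm_num) (by omega) (by norm_num; omega)
      by_cases h1 : m₁ = 0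
      · subst h1
        have Z1 : hw (0 &&& psiHat 3 m₂) = 0 := zero_and_hw _
        split_ifs <;> omega
      · have F1 : hw (m₁ &&& psiHat 3 m₁) % 2 = 1 :=
          FFd 3 m₁ (by norm_num) (by omega) (by norm_num; omega)
        have F3 : (hw (m₁ &&& psiHat 3 m₂) + hw (m₂ &&& psiHat 3 m₁)) % 2 = 1 :=
          FFo 3 m₁ m₂ (by norm_num) (by omega) (by omega) (by norm_num; omega)
            (by norm_num; omega) (by omega)
        split_ifs <;> omega


/-- the Geramita–Pullman maps `(γ_t, χ_t)` satisfy the odd Hamming-weight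
condition: for distinct `x₁, x₂ < ρ(t) = 8c + 2^d`,
`|(γ_t(x₁) ⊕ γ_t(x₂)) ∧ (χ_t(x₁) ⊕ χ_t(x₂))|` is odd. -/
theorem stmt16 (a c d : ℕ) (hd : d ≤ 3) (ha : a = 4 * c + d)
    (x₁ x₂ : ℕ) (h₁ : x₁ < 8 * c + 2 ^ d) (h₂ : x₂ < 8 * c + 2 ^ d) (hne : x₁ ≠ x₂) :
    Odd (hw ((gammaGP a c x₁ ^^^ gammaGP a c x₂) &&&
      (chiGP a c d x₁ ^^^ chiGP a c d x₂))) := by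
  have h2d : (2:ℕ) ^ d ≤ 8 :=
    le_trans (Nat.pow_le_pow_right (by norm_num) hd) (by norm_num)
  have h2d1 : (1:ℕ) ≤ 2 ^ d := Nat.one_le_two_pow
  obtain ⟨l₁, m₁, hm₁, rfl⟩ : ∃ l m, m < 8 ∧ x₁ = 8 * l + m :=
    ⟨x₁ / 8, x₁ % 8, Nat.mod_lt _ (by norm_num), (Nat.div_add_mod x₁ 8).symm⟩
  obtain ⟨l₂, m₂, hm₂, rfl⟩ : ∃ l m, m < 8 ∧ x₂ = 8 * l + m :=
    ⟨x₂ / 8, x₂ % 8, Nat.mod_lt _ (by norm_num), (Nat.div_add_mod x₂ 8).symm⟩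
  have hl₁ : l₁ ≤ c := by omega
  have hl₂ : l₂ ≤ c := by omega
  have hmc₁ : l₁ = c → m₁ < 2 ^ d := by intro h; omega
  have hmc₂ : l₂ = c → m₂ < 2 ^ d := by intro h; omega
  rw [Nat.odd_iff, hw_bilin]
  rcases Nat.lt_trichotomy l₁ l₂ with h | h | h
  · exact main_aux a c d l₁ m₁ l₂ m₂ hd ha hl₁ hm₁ hmc₁ hl₂ hm₂ hmc₂ (Or.inl h)
  · subst h
    rcases Nat.lt_trichotomy m₁ m₂ with hm | hm | hm
    · exact main_aux a c d l₁ m₁ l₁ m₂ hd ha hl₁ hm₁ hmc₁ hl₁ hm₂ hmc₂ (Or.inr ⟨rfl, hm⟩)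
    · omega
    · have := main_aux a c d l₁ m₂ l₁ m₁ hd ha hl₁ hm₂ hmc₂ hl₁ hm₁ hmc₁ (Or.inr ⟨rfl, hm⟩)
      omega
  · have := main_aux a c d l₂ m₂ l₁ m₁ hd ha hl₂ hm₂ hmc₂ hl₁ hm₁ hmc₁ (Or.inl h)
    omega
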